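/- In the AFT model T = e^{−θᵀW}V with covariate density h, the length-biased sampled pair (D,Z) has joint density f_{D,Z}(y,z) = e^{θᵀz} y g₀(e^{θᵀz} y) h(z) / (E[V] · E[e^{−θᵀW}]); consequently the marginal density of Z is f_Z(z) = e^{−θᵀz} h(z)/E[e^{−θᵀW}] and the conditional density of D given Z = z is f_{D|Z}(y|z) = e^{2θᵀz} y g₀(e^{θᵀz} y)/E[V]. In particular the marginal of Z does not depend on g₀. -/

import Mathlib

open MeasureTheory Set Real

/-- Length-biased sampling from the AFT model: the joint density
`f_{D,Z}(y,z) = e^(θᵀz) y g₀(e^(θᵀz) y) h(z) / (E[V]·E[e^(−θᵀW)])` has marginal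
`f_Z(z) = e^(−θᵀz) h(z)/E[e^(−θᵀW)]` (which does not depend on `g₀`) and conditional
`f_{D|Z}(y|z) = e^(2θᵀz) y g₀(e^(θᵀz) y)/E[V]`. -/
theorem stmt16 (k : ℕ) (θ : Fin k → ℝ)
    (g₀ : ℝ → ℝ) (hg₀0 : ∀ x, 0 ≤ g₀ x) (hg₀supp : ∀ x ≤ 0, g₀ x = 0)
    (hg₀1 : ∫ x in Ioi (0:ℝ), g₀ x = 1)
    (EV : ℝ) (hEV : EV = ∫ v in Ioi (0:ℝ), v * g₀ v) (hEVpos : 0 < EV)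
    (hEVint : IntegrableOn (fun v => v * g₀ v) (Ioi 0))
    (h : (Fin k → ℝ) → ℝ) (hh0 : ∀ z, 0 ≤ h z) (hh1 : ∫ z, h z = 1)
    (Eew : ℝ) (hEew : Eew = ∫ z, Real.exp (-(∑ i, θ i * z i)) * h z) (hEewpos : 0 < Eew)
    (fDZ : ℝ → (Fin k → ℝ) → ℝ)
    (hfDZ : ∀ y z, fDZ y z
      = Real.exp (∑ i, θ i * z i) * y * g₀ (Real.exp (∑ i, θ i * z i) * y) * h z
          / (EV * Eew)) :
    (∀ z, ∫ y in Ioi (0:ℝ), fDZ y z = Real.exp (-(∑ i, θ i * z i)) * h z / Eew)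
    ∧ (∀ z, h z ≠ 0 → ∀ y,
        fDZ y z / (Real.exp (-(∑ i, θ i * z i)) * h z / Eew)
          = Real.exp (2 * ∑ i, θ i * z i) * y
              * g₀ (Real.exp (∑ i, θ i * z i) * y) / EV) := by
  constructor
  · intro z
    set a := ∑ i, θ i * z i with ha
    have hea : 0 < Real.exp a := Real.exp_pos a
    have key : (∫ y in Ioi (0:ℝ), (fun v => v * g₀ v) (Real.exp a * y))
        = (Real.exp a)⁻¹ • ∫ v in Ioi (Real.exp a * 0), v * g₀ v :=
      integral_comp_mul_left_Ioi (fun v => v * g₀ v) 0 hea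
    simp only [mul_zero, smul_eq_mul] at key
    have : ∀ y : ℝ, fDZ y z = (Real.exp a * y * g₀ (Real.exp a * y)) * (h z / (EV * Eew)) := by
      intro y; rw [hfDZ]; ring
    calc ∫ y in Ioi (0:ℝ), fDZ y z
        = ∫ y in Ioi (0:ℝ), (Real.exp a * y * g₀ (Real.exp a * y)) * (h z / (EV * Eew)) := by
          exact setIntegral_congr_fun measurableSet_Ioi (fun y _ => this y)
      _ = (∫ y in Ioi (0:ℝ), Real.exp a * y * g₀ (Real.exp a * y)) * (h z / (EV * Eew)) :=
          integral_mul_const _ _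
      _ = Real.exp (-a) * h z / Eew := by
          rw [key, ← hEV, Real.exp_neg]
          field_simp
  · intro z hz y
    rw [hfDZ]
    have hea : Real.exp (∑ i, θ i * z i) ≠ 0 := (Real.exp_pos _).ne'
    have h2 : Real.exp (2 * ∑ i, θ i * z i)
        = Real.exp (∑ i, θ i * z i) * Real.exp (∑ i, θ i * z i) := by
      rw [← Real.exp_add]; ring_nf
    rw [Real.exp_neg, h2]
    field_simp
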